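/- arXiv:2407.07596 — 2 statements merged into one kernel-verified Lean document; each statement's English description precedes it below -/
import Mathlib

section
/- Let 0 < γ < 1/2, let f(t) = 1/t + 1/(1-t), and let g₁,…,g_J : [γ,1-γ] → ℝ be convex and 1-Lipschitz. For λ ∈ [0,∞)^J, let p(λ) denote the unique minimizer over t ∈ [γ,1-γ] of the Lagrangian f(t) + Σⱼ λⱼ gⱼ(t) (which exists and is unique since the Lagrangian is strictly convex and continuous on the compact interval). Then for all λ, λ' ∈ [0,∞)^J, |p(λ) - p(λ')| ≤ (1/32)·‖λ - λ'‖₁. -/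
set_option maxHeartbeats 1000000

lemma inv_combo (u v θ : ℝ) (hu : u ≠ 0) (hv : v ≠ 0) (hw : (1-θ)*u+θ*v ≠ 0) :
    (1-θ)*(1/u) + θ*(1/v) - 1/((1-θ)*u+θ*v)
      = θ*(1-θ)*(v-u)^2 * (1/(u*v*((1-θ)*u+θ*v))) := by
  field_simp
  ring

lemma var_strong_cvx (u v θ : ℝ) (hu0 : 0 < u) (hu1 : u < 1) (hv0 : 0 < v)
    (hv1 : v < 1) (hθ0 : 0 ≤ θ) (hθ1 : θ ≤ 1) :
    1/((1-θ)*u + θ*v) + 1/(1 - ((1-θ)*u + θ*v)) + 16*θ*(1-θ)*(v-u)^2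
      ≤ (1-θ)*(1/u + 1/(1-u)) + θ*(1/v + 1/(1-v)) := by
  have hw0 : 0 < (1-θ)*u + θ*v := by
    rcases le_total u v with h | h
    · have : u ≤ (1-θ)*u + θ*v := by nlinarith [mul_nonneg hθ0 (sub_nonneg.mpr h)]
      linarith
    · have : v ≤ (1-θ)*u + θ*v := by
        nlinarith [mul_nonneg (by linarith : (0:ℝ) ≤ 1-θ) (sub_nonneg.mpr h)]
      linarith
  have hw1' : 0 < (1-θ)*(1-u) + θ*(1-v) := by
    rcases le_total u v with h | h
    · have : 1-v ≤ (1-θ)*(1-u) + θ*(1-v) := by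
        nlinarith [mul_nonneg (by linarith : (0:ℝ) ≤ 1-θ) (sub_nonneg.mpr h)]
      linarith
    · have : 1-u ≤ (1-θ)*(1-u) + θ*(1-v) := by
        nlinarith [mul_nonneg hθ0 (sub_nonneg.mpr h)]
      linarith
  have hw1 : (1-θ)*u + θ*v < 1 := by nlinarith
  set w := (1-θ)*u + θ*v with hwdef
  have hcomp : 1 - w = (1-θ)*(1-u) + θ*(1-v) := by rw [hwdef]; ring
  have hx : 0 < u*v*w := by positivity
  have hy : 0 < (1-u)*(1-v)*(1-w) := by
    have h1 : 0 < 1 - u := by linarith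
    have h2 : 0 < 1 - v := by linarith
    have h3 : 0 < 1 - w := by linarith
    positivity
  have k1 : (1-θ)*(1/u) + θ*(1/v) - 1/w
      = θ*(1-θ)*(v-u)^2 * (1/(u*v*w)) := by
    rw [hwdef]; exact inv_combo u v θ (ne_of_gt hu0) (ne_of_gt hv0) (ne_of_gt hw0)
  have k2 : (1-θ)*(1/(1-u)) + θ*(1/(1-v)) - 1/(1-w)
      = θ*(1-θ)*(v-u)^2 * (1/((1-u)*(1-v)*(1-w))) := by
    rw [hcomp]
    have := inv_combo (1-u) (1-v) θ (by linarith) (by linarith)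
      (by rw [← hcomp]; linarith)
    rw [this]
    have e : ((1-v)-(1-u))^2 = (v-u)^2 := by ring
    rw [e]
  set x := u*v*w
  set y := (1-u)*(1-v)*(1-w)
  have hxy : x*y ≤ 1/64 := by
    have h1 : u*(1-u) ≤ 1/4 := by nlinarith [sq_nonneg (2*u-1)]
    have h2 : v*(1-v) ≤ 1/4 := by nlinarith [sq_nonneg (2*v-1)]
    have h3 : w*(1-w) ≤ 1/4 := by nlinarith [sq_nonneg (2*w-1)]
    have e : x*y = (u*(1-u))*((v*(1-v))*(w*(1-w))) := by ring
    rw [e]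
    have hu' : 0 ≤ u*(1-u) := by nlinarith
    have hv' : 0 ≤ v*(1-v) := by nlinarith
    have hw' : 0 ≤ w*(1-w) := by nlinarith
    calc (u*(1-u))*((v*(1-v))*(w*(1-w))) ≤ (1/4)*((1/4)*(1/4)) := by
          apply mul_le_mul h1 _ (mul_nonneg hv' hw') (by norm_num)
          exact mul_le_mul h2 h3 hw' (by norm_num)
      _ = 1/64 := by norm_num
  have hsum16 : 16*x*y ≤ x + y := by
    nlinarith [sq_nonneg (x - y), mul_pos hx hy, sq_nonneg (x + y)]
  have h16 : (16:ℝ) ≤ 1/x + 1/y := by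
    rw [div_add_div _ _ (ne_of_gt hx) (ne_of_gt hy), le_div_iff₀ (mul_pos hx hy)]
    linarith
  have h0 : 0 ≤ θ*(1-θ)*(v-u)^2 := mul_nonneg (mul_nonneg hθ0 (by linarith)) (sq_nonneg _)
  have comb : (1-θ)*(1/u+1/(1-u)) + θ*(1/v+1/(1-v)) - (1/w+1/(1-w))
      = θ*(1-θ)*(v-u)^2*(1/x+1/y) := by
    linear_combination k1 + k2
  linarith [mul_le_mul_of_nonneg_left h16 h0, comb]

lemma limit_aux (c D : ℝ) (h : ∀ θ:ℝ, 0 < θ → θ < 1 → (1-θ)*c ≤ D) : c ≤ D := by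
  by_contra hlt
  push_neg at hlt
  have h2 := h (1/2) (by norm_num) (by norm_num)
  have hc : 0 < c := by linarith
  have hD : 0 ≤ D := by linarith
  have hθp : 0 < (c - D)/(2*c) := div_pos (by linarith) (by linarith)
  have hθ1 : (c - D)/(2*c) < 1 := by
    rw [div_lt_one (by linarith)]; linarith
  have hfin := h _ hθp hθ1
  have e : (1 - (c - D)/(2*c))*c = (c + D)/2 := by field_simp; ring
  rw [e] at hfin
  linarith


/-- Lipschitz dependence of the Lagrangian minimizer on the dual variables:
if `p(λ)` is the unique minimizer over `[γ,1-γ]` of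
`t ↦ 1/t + 1/(1-t) + ∑ⱼ λⱼ gⱼ(t)` (with each `gⱼ` convex and 1-Lipschitz), then
`|p(λ) - p(λ')| ≤ (1/32)·‖λ - λ'‖₁` for all `λ, λ' ≥ 0`. -/
theorem lagrangian_minimizer_lipschitz_in_duals
    (γ : ℝ) (hγ0 : 0 < γ) (hγ : γ < 1 / 2) (J : ℕ)
    (g : Fin J → ℝ → ℝ)
    (hg_cvx : ∀ j, ConvexOn ℝ (Set.Icc γ (1 - γ)) (g j))
    (hg_lip : ∀ j, LipschitzOnWith 1 (g j) (Set.Icc γ (1 - γ)))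
    (p : (Fin J → ℝ) → ℝ)
    (hp_mem : ∀ lam : Fin J → ℝ, (∀ j, 0 ≤ lam j) → p lam ∈ Set.Icc γ (1 - γ))
    (hp_min : ∀ lam : Fin J → ℝ, (∀ j, 0 ≤ lam j) → ∀ t ∈ Set.Icc γ (1 - γ),
      (1 / p lam + 1 / (1 - p lam)) + ∑ j, lam j * g j (p lam)
        ≤ (1 / t + 1 / (1 - t)) + ∑ j, lam j * g j t)
    (hp_unique : ∀ lam : Fin J → ℝ, (∀ j, 0 ≤ lam j) → ∀ t ∈ Set.Icc γ (1 - γ),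
      (1 / t + 1 / (1 - t)) + ∑ j, lam j * g j t
        = (1 / p lam + 1 / (1 - p lam)) + ∑ j, lam j * g j (p lam) → t = p lam)
    (lam lam' : Fin J → ℝ) (hlam : ∀ j, 0 ≤ lam j) (hlam' : ∀ j, 0 ≤ lam' j) :
    |p lam - p lam'| ≤ (1 / 32) * ∑ j, |lam j - lam' j| := by
  have hS0 : (0:ℝ) ≤ ∑ j, |lam j - lam' j| :=
    Finset.sum_nonneg fun j _ => abs_nonneg _
  -- generic strong-convexity consequence of minimality
  have key : ∀ (μ : Fin J → ℝ), (∀ j, 0 ≤ μ j) → ∀ b ∈ Set.Icc γ (1 - γ),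
      16*(b - p μ)^2 ≤
        ((1/b + 1/(1-b)) + ∑ j, μ j * g j b)
          - ((1/(p μ) + 1/(1-(p μ))) + ∑ j, μ j * g j (p μ)) := by
    intro μ hμ b hb
    apply limit_aux
    intro θ hθ0 hθ1
    obtain ⟨ha1, ha2⟩ := hp_mem μ hμ
    obtain ⟨hb1, hb2⟩ := hb
    have ha0 : 0 < p μ := lt_of_lt_of_le hγ0 ha1
    have ha1' : p μ < 1 := by linarith
    have hb0 : 0 < b := lt_of_lt_of_le hγ0 hb1
    have hb1' : b < 1 := by linarith
    have hwmem : (1-θ)*(p μ) + θ*b ∈ Set.Icc γ (1 - γ) := by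
      constructor
      · nlinarith [mul_nonneg (by linarith : (0:ℝ) ≤ 1-θ) (by linarith : 0 ≤ p μ - γ),
          mul_nonneg hθ0.le (by linarith : 0 ≤ b - γ)]
      · nlinarith [mul_nonneg (by linarith : (0:ℝ) ≤ 1-θ) (by linarith : 0 ≤ (1-γ) - p μ),
          mul_nonneg hθ0.le (by linarith : 0 ≤ (1-γ) - b)]
    have hmin := hp_min μ hμ _ hwmem
    have hsc := var_strong_cvx (p μ) b θ ha0 ha1' hb0 hb1' hθ0.le hθ1.le
    have hgsum : ∑ j, μ j * g j ((1-θ)*(p μ) + θ*b)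
        ≤ (1-θ)*∑ j, μ j * g j (p μ) + θ*∑ j, μ j * g j b := by
      have step : ∀ j ∈ Finset.univ, μ j * g j ((1-θ)*(p μ) + θ*b)
          ≤ μ j * ((1-θ)*g j (p μ) + θ*g j b) := by
        intro j _
        apply mul_le_mul_of_nonneg_left _ (hμ j)
        have := (hg_cvx j).2 ⟨ha1, ha2⟩ ⟨hb1, hb2⟩
          (by linarith : (0:ℝ) ≤ 1-θ) hθ0.le (by ring)
        simpa [smul_eq_mul] using this
      calc ∑ j, μ j * g j ((1-θ)*(p μ) + θ*b)
          ≤ ∑ j, μ j * ((1-θ)*g j (p μ) + θ*g j b) := Finset.sum_le_sum step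
        _ = (1-θ)*∑ j, μ j * g j (p μ) + θ*∑ j, μ j * g j b := by
            rw [Finset.mul_sum, Finset.mul_sum, ← Finset.sum_add_distrib]
            exact Finset.sum_congr rfl fun j _ => by ring
    have h' : θ*((1-θ)*(16*(b - p μ)^2))
        ≤ θ*((((1/b + 1/(1-b)) + ∑ j, μ j * g j b)
          - ((1/(p μ) + 1/(1-(p μ))) + ∑ j, μ j * g j (p μ)))) := by
      nlinarith [hmin, hsc, hgsum]
    have := (mul_le_mul_iff_right₀ hθ0).mp h'
    linarith
  obtain ⟨hu1, hu2⟩ := hp_mem lam hlam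
  obtain ⟨hv1, hv2⟩ := hp_mem lam' hlam'
  have K1 := key lam hlam (p lam') ⟨hv1, hv2⟩
  have K2 := key lam' hlam' (p lam) ⟨hu1, hu2⟩
  have hdual : (∑ j, lam j * g j (p lam') - ∑ j, lam j * g j (p lam))
      + (∑ j, lam' j * g j (p lam) - ∑ j, lam' j * g j (p lam'))
      ≤ (∑ j, |lam j - lam' j|) * |p lam' - p lam| := by
    have e : (∑ j, lam j * g j (p lam') - ∑ j, lam j * g j (p lam))
        + (∑ j, lam' j * g j (p lam) - ∑ j, lam' j * g j (p lam'))
        = ∑ j, (lam j - lam' j)*(g j (p lam') - g j (p lam)) := by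
      rw [← Finset.sum_sub_distrib, ← Finset.sum_sub_distrib, ← Finset.sum_add_distrib]
      exact Finset.sum_congr rfl fun j _ => by ring
    rw [e, Finset.sum_mul]
    apply Finset.sum_le_sum
    intro j _
    have lip : |g j (p lam') - g j (p lam)| ≤ |p lam' - p lam| := by
      have := (hg_lip j).dist_le_mul (p lam') ⟨hv1, hv2⟩ (p lam) ⟨hu1, hu2⟩
      simpa [Real.dist_eq] using this
    calc (lam j - lam' j)*(g j (p lam') - g j (p lam))
        ≤ |(lam j - lam' j)*(g j (p lam') - g j (p lam))| := le_abs_self _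
      _ = |lam j - lam' j| * |g j (p lam') - g j (p lam)| := abs_mul _ _
      _ ≤ |lam j - lam' j| * |p lam' - p lam| :=
          mul_le_mul_of_nonneg_left lip (abs_nonneg _)
  have hfinal : 32*(p lam' - p lam)^2
      ≤ (∑ j, |lam j - lam' j|) * |p lam' - p lam| := by nlinarith [K1, K2, hdual]
  rcases eq_or_ne (p lam) (p lam') with h | h
  · rw [h, sub_self, abs_zero]
    positivity
  · have habs : 0 < |p lam' - p lam| := abs_pos.mpr (sub_ne_zero.mpr (Ne.symm h))
    have h32 : 32*|p lam' - p lam| ≤ ∑ j, |lam j - lam' j| := by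
      nlinarith [habs, hfinal, sq_abs (p lam' - p lam)]
    rw [abs_sub_comm]
    linarith
end

section
/- Let (X, 𝒜, μ) be a probability space, 0 < γ < 1/2, and let g₁,…,g_J : [γ,1-γ] × X → [0,1] be jointly measurable functions such that for each x ∈ X and each j, the map t ↦ gⱼ(t,x) is convex and 1-Lipschitz. For λ ∈ [0,∞)^J and x ∈ X, let p(x,λ) be the unique minimizer over t ∈ [γ,1-γ] of f(t) + Σⱼ λⱼ gⱼ(t,x), where f(t) = 1/t + 1/(1-t). Then for each j, the function h_j(λ) = ∫ gⱼ(p(x,λ), x) dμ(x) is (1/32)-Lipschitz on [0,∞)^J with respect to the ℓ¹ norm, i.e., |h_j(λ) - h_j(λ')| ≤ (1/32)·‖λ - λ'‖₁ for all λ, λ' ∈ [0,∞)^J. -/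
open MeasureTheory

private lemma aux_deriv1 {x : ℝ} (hx : x ∈ Set.Ioo (0:ℝ) 1) :
    HasDerivAt (fun t : ℝ => 1/t + 1/(1-t) - 16*t^2)
      (-(x^2)⁻¹ + ((1-x)^2)⁻¹ - 32*x) x := by
  obtain ⟨hx0, hx1⟩ := hx
  have hne : x ≠ 0 := ne_of_gt hx0
  have hne1 : (1:ℝ) - x ≠ 0 := by intro h; linarith [sub_eq_zero.mp h]
  have h1 : HasDerivAt (fun t : ℝ => 1/t) (-(x^2)⁻¹) x := by
    simpa [one_div] using hasDerivAt_inv hne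
  have h2 : HasDerivAt (fun t : ℝ => 1/(1-t)) (((1-x)^2)⁻¹) x := by
    have := ((hasDerivAt_const x (1:ℝ)).sub (hasDerivAt_id x)).inv hne1
    simpa [one_div, Pi.inv_def, Pi.sub_def] using this
  have h3 : HasDerivAt (fun t : ℝ => 16*t^2) (32*x) x := by
    have := (hasDerivAt_pow 2 x).const_mul (16:ℝ)
    simpa using this.congr_deriv (by ring)
  exact (h1.add h2).sub h3

private lemma aux_deriv2 {x : ℝ} (hx : x ∈ Set.Ioo (0:ℝ) 1) :
    HasDerivAt (fun t : ℝ => -(t^2)⁻¹ + ((1-t)^2)⁻¹ - 32*t)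
      (2*(x^3)⁻¹ + 2*((1-x)^3)⁻¹ - 32) x := by
  obtain ⟨hx0, hx1⟩ := hx
  have hne : x ≠ 0 := ne_of_gt hx0
  have hne1 : (1:ℝ) - x ≠ 0 := by intro h; linarith [sub_eq_zero.mp h]
  have h1 : HasDerivAt (fun t : ℝ => -(t^2)⁻¹) (2*(x^3)⁻¹) x := by
    have := ((hasDerivAt_pow 2 x).inv (pow_ne_zero 2 hne)).neg
    refine this.congr_deriv ?_
    field_simp
    ring
  have h2 : HasDerivAt (fun t : ℝ => ((1-t)^2)⁻¹) (2*((1-x)^3)⁻¹) x := by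
    have hc : HasDerivAt (fun t : ℝ => (1-t)^2) (2*(1-x)^1*(0-1)) x :=
      ((hasDerivAt_const x (1:ℝ)).sub (hasDerivAt_id x)).pow 2
    have := hc.inv (pow_ne_zero 2 hne1)
    refine this.congr_deriv ?_
    field_simp
    ring
  have h3 : HasDerivAt (fun t : ℝ => 32*t) (32:ℝ) x := by
    simpa using (hasDerivAt_id x).const_mul (32:ℝ)
  exact (h1.add h2).sub h3

private lemma aux_convex {γ : ℝ} (hγ0 : 0 < γ) (hγ : γ < 1/2) :
    ConvexOn ℝ (Set.Icc γ (1-γ)) (fun t : ℝ => 1/t + 1/(1-t) - 16*t^2) := by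
  have hsub : Set.Icc γ (1-γ) ⊆ Set.Ioo (0:ℝ) 1 := fun t ht =>
    ⟨lt_of_lt_of_le hγ0 ht.1, by have := ht.2; linarith⟩
  have hint : interior (Set.Icc γ (1-γ)) = Set.Ioo γ (1-γ) := interior_Icc
  have hsub' : Set.Ioo γ (1-γ) ⊆ Set.Ioo (0:ℝ) 1 := fun t ht =>
    ⟨lt_trans hγ0 ht.1, by have := ht.2; linarith⟩
  set f := fun t : ℝ => 1/t + 1/(1-t) - 16*t^2 with hf
  set φ := fun t : ℝ => -(t^2)⁻¹ + ((1-t)^2)⁻¹ - 32*t with hφ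
  have heq : ∀ x ∈ Set.Ioo (0:ℝ) 1, deriv f x = φ x := fun x hx => (aux_deriv1 hx).deriv
  apply convexOn_of_deriv2_nonneg (convex_Icc _ _)
  · intro x hx
    exact ((aux_deriv1 (hsub hx)).continuousAt.continuousWithinAt)
  · intro x hx
    rw [hint] at hx
    exact ((aux_deriv1 (hsub' hx)).differentiableAt).differentiableWithinAt
  · intro x hx
    rw [hint] at hx
    have hev : deriv f =ᶠ[nhds x] φ :=
      Filter.eventuallyEq_of_mem (isOpen_Ioo.mem_nhds (hsub' hx)) heq
    exact (((aux_deriv2 (hsub' hx)).differentiableAt).congr_of_eventuallyEq hev).differentiableWithinAt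
  · intro x hx
    rw [hint] at hx
    have hx01 := hsub' hx
    have hev : deriv f =ᶠ[nhds x] φ :=
      Filter.eventuallyEq_of_mem (isOpen_Ioo.mem_nhds hx01) heq
    have : deriv^[2] f x = 2*(x^3)⁻¹ + 2*((1-x)^3)⁻¹ - 32 := by
      rw [Function.iterate_succ, Function.iterate_one, Function.comp_apply]
      rw [hev.deriv_eq]
      exact (aux_deriv2 hx01).deriv
    rw [this]
    obtain ⟨hx0, hx1⟩ := hx01
    have hy0 : 0 < 1 - x := by linarith
    have hs : 0 < x*(1-x) := mul_pos hx0 hy0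
    have hq : (0:ℝ) ≤ 16*(x*(1-x))^2 + 4*(x*(1-x)) + 4 := by positivity
    have key : 16 * (x^3*(1-x)^3) ≤ x^3 + (1-x)^3 := by
      nlinarith [mul_nonneg (sq_nonneg (x - 1/2)) hq]
    have e : 2*(x^3)⁻¹ + 2*((1-x)^3)⁻¹ - 32
        = (2*(1-x)^3 + 2*x^3 - 32*(x^3*(1-x)^3))/(x^3*(1-x)^3) := by
      field_simp
    rw [e]
    apply div_nonneg _ (by positivity)
    linarith

private lemma strong_min {γ : ℝ} (K : ℝ → ℝ)
    (hK : ConvexOn ℝ (Set.Icc γ (1-γ)) (fun t => K t - 16*t^2))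
    {P Q : ℝ} (hP : P ∈ Set.Icc γ (1-γ)) (hQ : Q ∈ Set.Icc γ (1-γ))
    (hmin : ∀ t ∈ Set.Icc γ (1-γ), K P ≤ K t) :
    K P + 16*(Q-P)^2 ≤ K Q := by
  by_contra hcon
  push_neg at hcon
  have hne : Q ≠ P := by rintro rfl; simp at hcon
  have hd2 : 0 < (Q-P)^2 :=
    lt_of_le_of_ne (sq_nonneg _) (Ne.symm (pow_ne_zero 2 (sub_ne_zero.mpr hne)))
  set d2 := (Q-P)^2 with hd2def
  set A := K Q - K P with hA
  have hA0 : 0 ≤ A := by have := hmin Q hQ; rw [hA]; linarith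
  have hAlt : A < 16*d2 := by rw [hA]; linarith
  set s := (1 - A/(16*d2))/2 with hs
  have hfrac0 : 0 ≤ A/(16*d2) := div_nonneg hA0 (by linarith)
  have hfrac1 : A/(16*d2) < 1 := (div_lt_one (by linarith)).mpr hAlt
  have hs0 : 0 < s := by rw [hs]; linarith
  have hs1 : s < 1 := by rw [hs]; linarith
  have hmem : (1-s) • P + s • Q ∈ Set.Icc γ (1-γ) :=
    (convex_Icc γ (1-γ)) hP hQ (by linarith) (le_of_lt hs0) (by ring)
  have hcvx := hK.2 hP hQ (by linarith : (0:ℝ) ≤ 1-s) (le_of_lt hs0) (by ring)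
  simp only [smul_eq_mul] at hcvx hmem
  have hmin' := hmin _ hmem
  have e1 : (1-s)*(K P - 16*P^2) + s*(K Q - 16*Q^2)
      = K P + s*A - 16*((1-s)*P^2 + s*Q^2) := by rw [hA]; ring
  rw [e1] at hcvx
  have h3 : 16*((1-s)*P^2 + s*Q^2 - ((1-s)*P+s*Q)^2) ≤ s*A := by linarith
  have step1 : 16*(1-s)*d2 ≤ A := by
    have h4 : s*(16*(1-s)*d2) ≤ s*A := by
      calc s*(16*(1-s)*d2) = 16*((1-s)*P^2 + s*Q^2 - ((1-s)*P+s*Q)^2) := by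
            rw [hd2def]; ring
        _ ≤ s*A := h3
    exact le_of_mul_le_mul_left h4 hs0
  have hval : 16*(1-s)*d2 = 8*d2 + A/2 := by
    rw [hs]; field_simp; ring
  linarith

private lemma convexOn_finset_sum {ι : Type*} (s : Finset ι) {D : Set ℝ} (hD : Convex ℝ D)
    (f : ι → ℝ → ℝ) (hf : ∀ i ∈ s, ConvexOn ℝ D (f i)) :
    ConvexOn ℝ D (fun t => ∑ i ∈ s, f i t) := by
  induction s using Finset.cons_induction with
  | empty => simpa using convexOn_const 0 hD
  | cons i s hi ih =>
    simp only [Finset.sum_cons]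
    exact (hf i (Finset.mem_cons_self _ _)).add
      (ih fun j hj => hf j (Finset.mem_cons.mpr (Or.inr hj)))

/-- The constraint moment maps `hⱼ(λ) = ∫ gⱼ(p(x,λ), x) dμ(x)` are `(1/32)`-Lipschitz in the
dual variables with respect to the `ℓ¹` norm, where `p(x,λ)` is the unique minimizer of the
pointwise Lagrangian `t ↦ 1/t + 1/(1-t) + ∑ⱼ λⱼ gⱼ(t,x)` over `[γ, 1-γ]`. -/
theorem constraint_moments_lipschitz_in_duals
    {X : Type*} [MeasurableSpace X] (μ : Measure X) [IsProbabilityMeasure μ]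
    (γ : ℝ) (hγ0 : 0 < γ) (hγ : γ < 1 / 2) (J : ℕ)
    (g : Fin J → ℝ → X → ℝ)
    (hg_meas : ∀ j, Measurable (Function.uncurry (g j)))
    (hg01 : ∀ j, ∀ t ∈ Set.Icc γ (1 - γ), ∀ x, g j t x ∈ Set.Icc (0 : ℝ) 1)
    (hg_cvx : ∀ j x, ConvexOn ℝ (Set.Icc γ (1 - γ)) (fun t => g j t x))
    (hg_lip : ∀ j x, LipschitzOnWith 1 (fun t => g j t x) (Set.Icc γ (1 - γ)))
    (p : X → (Fin J → ℝ) → ℝ)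
    (hp_meas : ∀ lam : Fin J → ℝ, (∀ j, 0 ≤ lam j) → Measurable (fun x => p x lam))
    (hp_mem : ∀ x, ∀ lam : Fin J → ℝ, (∀ j, 0 ≤ lam j) → p x lam ∈ Set.Icc γ (1 - γ))
    (hp_min : ∀ x, ∀ lam : Fin J → ℝ, (∀ j, 0 ≤ lam j) → ∀ t ∈ Set.Icc γ (1 - γ),
      (1 / p x lam + 1 / (1 - p x lam)) + ∑ j, lam j * g j (p x lam) x
        ≤ (1 / t + 1 / (1 - t)) + ∑ j, lam j * g j t x)
    (hp_unique : ∀ x, ∀ lam : Fin J → ℝ, (∀ j, 0 ≤ lam j) → ∀ t ∈ Set.Icc γ (1 - γ),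
      (1 / t + 1 / (1 - t)) + ∑ j, lam j * g j t x
        = (1 / p x lam + 1 / (1 - p x lam)) + ∑ j, lam j * g j (p x lam) x → t = p x lam)
    (j : Fin J)
    (lam lam' : Fin J → ℝ) (hlam : ∀ j', 0 ≤ lam j') (hlam' : ∀ j', 0 ≤ lam' j') :
    |(∫ x, g j (p x lam) x ∂μ) - ∫ x, g j (p x lam') x ∂μ|
      ≤ (1 / 32) * ∑ j', |lam j' - lam' j'| := by
  set D := Set.Icc γ (1 - γ) with hD
  set S := ∑ j', |lam j' - lam' j'| with hS
  have hS0 : 0 ≤ S := Finset.sum_nonneg fun i _ => abs_nonneg _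
  -- pointwise stability of the minimizer
  have key : ∀ x : X, |p x lam - p x lam'| ≤ (1/32) * S := by
    intro x
    set P := p x lam with hPdef
    set Q := p x lam' with hQdef
    have hPmem : P ∈ D := hp_mem x lam hlam
    have hQmem : Q ∈ D := hp_mem x lam' hlam'
    -- convexity of the shifted Lagrangians
    have hsumcvx : ∀ (lv : Fin J → ℝ), (∀ j', 0 ≤ lv j') →
        ConvexOn ℝ D (fun t => ∑ j', lv j' * g j' t x) := by
      intro lv hlv
      exact convexOn_finset_sum _ (convex_Icc _ _) _ fun i _ => by
        simpa [smul_eq_mul] using (hg_cvx i x).smul (hlv i)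
    have hKcvx : ∀ (lv : Fin J → ℝ), (∀ j', 0 ≤ lv j') →
        ConvexOn ℝ D (fun t => ((1/t + 1/(1-t)) + ∑ j', lv j' * g j' t x) - 16*t^2) := by
      intro lv hlv
      have heq : (fun t : ℝ => ((1/t + 1/(1-t)) + ∑ j', lv j' * g j' t x) - 16*t^2)
          = fun t => (1/t + 1/(1-t) - 16*t^2) + ∑ j', lv j' * g j' t x := by
        funext t; ring
      rw [heq]
      exact (aux_convex hγ0 hγ).add (hsumcvx lv hlv)
    have h1 := strong_min (fun t => (1/t + 1/(1-t)) + ∑ j', lam j' * g j' t x)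
      (hKcvx lam hlam) hPmem hQmem (hp_min x lam hlam)
    have h2 := strong_min (fun t => (1/t + 1/(1-t)) + ∑ j', lam' j' * g j' t x)
      (hKcvx lam' hlam') hQmem hPmem (hp_min x lam' hlam')
    -- Lipschitz bound on each g
    have hlipb : ∀ j' : Fin J, |g j' Q x - g j' P x| ≤ |Q - P| := by
      intro j'
      have := (hg_lip j' x).dist_le_mul Q hQmem P hPmem
      simpa [Real.dist_eq] using this
    -- combine
    have ecomb : ∑ j', (lam j' - lam' j') * (g j' Q x - g j' P x)
        = ((∑ j', lam j' * g j' Q x) - ∑ j', lam j' * g j' P x)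
          - ((∑ j', lam' j' * g j' Q x) - ∑ j', lam' j' * g j' P x) := by
      rw [← Finset.sum_sub_distrib, ← Finset.sum_sub_distrib, ← Finset.sum_sub_distrib]
      exact Finset.sum_congr rfl fun i _ => by ring
    have hbound : ∑ j', (lam j' - lam' j') * (g j' Q x - g j' P x) ≤ S * |Q - P| := by
      rw [hS, Finset.sum_mul]
      apply Finset.sum_le_sum
      intro i _
      calc (lam i - lam' i) * (g i Q x - g i P x)
          ≤ |(lam i - lam' i) * (g i Q x - g i P x)| := le_abs_self _
        _ = |lam i - lam' i| * |g i Q x - g i P x| := abs_mul _ _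
        _ ≤ |lam i - lam' i| * |Q - P| :=
            mul_le_mul_of_nonneg_left (hlipb i) (abs_nonneg _)
    have hmain : 32 * (Q - P)^2 ≤ S * |Q - P| := by
      have hPQ : (P - Q)^2 = (Q - P)^2 := by ring
      rw [hPQ] at h2
      calc 32 * (Q - P)^2
          ≤ (((1/Q + 1/(1-Q)) + ∑ j', lam j' * g j' Q x)
              - ((1/P + 1/(1-P)) + ∑ j', lam j' * g j' P x))
            - (((1/Q + 1/(1-Q)) + ∑ j', lam' j' * g j' Q x)
              - ((1/P + 1/(1-P)) + ∑ j', lam' j' * g j' P x)) := by linarith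
        _ = ∑ j', (lam j' - lam' j') * (g j' Q x - g j' P x) := by rw [ecomb]; ring
        _ ≤ S * |Q - P| := hbound
    rw [abs_sub_comm]
    rcases eq_or_lt_of_le (abs_nonneg (Q - P)) with h0 | hpos
    · rw [← h0]; positivity
    · have hsq : (Q - P)^2 = |Q - P|^2 := (sq_abs _).symm
      rw [hsq] at hmain
      nlinarith [hmain, hpos]
  -- measurability and integrability
  have hmeas1 : Measurable fun x => g j (p x lam) x :=
    (hg_meas j).comp ((hp_meas lam hlam).prodMk measurable_id)
  have hmeas2 : Measurable fun x => g j (p x lam') x :=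
    (hg_meas j).comp ((hp_meas lam' hlam').prodMk measurable_id)
  have hi1 : Integrable (fun x => g j (p x lam) x) μ := by
    apply (integrable_const (1:ℝ)).mono' hmeas1.aestronglyMeasurable
    filter_upwards with x
    rw [Real.norm_eq_abs]
    have h01 := hg01 j _ (hp_mem x lam hlam) x
    rw [abs_le]; exact ⟨by linarith [h01.1], h01.2⟩
  have hi2 : Integrable (fun x => g j (p x lam') x) μ := by
    apply (integrable_const (1:ℝ)).mono' hmeas2.aestronglyMeasurable
    filter_upwards with x
    rw [Real.norm_eq_abs]
    have h01 := hg01 j _ (hp_mem x lam' hlam') x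
    rw [abs_le]; exact ⟨by linarith [h01.1], h01.2⟩
  have hptwise : ∀ x, |g j (p x lam) x - g j (p x lam') x| ≤ (1/32) * S := by
    intro x
    have hlipb := (hg_lip j x).dist_le_mul (p x lam) (hp_mem x lam hlam)
      (p x lam') (hp_mem x lam' hlam')
    have : |g j (p x lam) x - g j (p x lam') x| ≤ |p x lam - p x lam'| := by
      simpa [Real.dist_eq] using hlipb
    exact this.trans (key x)
  rw [← integral_sub hi1 hi2]
  calc |∫ x, (g j (p x lam) x - g j (p x lam') x) ∂μ|
      ≤ ∫ x, |g j (p x lam) x - g j (p x lam') x| ∂μ := by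
        simpa [Real.norm_eq_abs] using
          norm_integral_le_integral_norm (fun x => g j (p x lam) x - g j (p x lam') x) (μ := μ)
    _ ≤ ∫ _x, (1/32) * S ∂μ :=
        integral_mono (hi1.sub hi2).abs (integrable_const _) hptwise
    _ = (1/32) * S := by simp
end
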